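/- Fix β ∈ (1,2) and let α₁, α₂ ∈ (0,2−β) be such that T_{β,α₁} and T_{β,α₂} both have matching. If I(β,α₁) ≠ I(β,α₂), then the closures in ℝ of I(β,α₁) and I(β,α₂) are disjoint. -/

import Mathlib

noncomputable section

/-- The upper intermediate β-transformation `T⁺_{β,α}` on `[0,1]`. -/
def Tpos (β α : ℝ) (x : ℝ) : ℝ :=
  if x = (1 - α) / β then 0 else Int.fract (β * x + α)

/-- The lower intermediate β-transformation `T⁻_{β,α}` on `[0,1]`. -/
def Tneg (β α : ℝ) (x : ℝ) : ℝ :=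
  if x = (1 - α) / β then 1 else Int.fract (β * x + α)

/-- The itinerary `τ⁺_{β,α}(x)`: index `n` (from 0) is the `(n+1)`-st entry;
entry is `false` (i.e. 0) iff the `n`-th iterate is `< c`. -/
def tauPos (β α x : ℝ) : ℕ → Bool :=
  fun n => if (Tpos β α)^[n] x < (1 - α) / β then false else true

/-- The itinerary `τ⁻_{β,α}(x)`: entry is `false` (i.e. 0) iff the iterate is `≤ c`. -/
def tauNeg (β α x : ℝ) : ℕ → Bool :=
  fun n => if (Tneg β α)^[n] x ≤ (1 - α) / β then false else true

/-- The kneading invariant `k₊` of `(β,α)`. -/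
def kPlus (β α : ℝ) : ℕ → Bool := tauPos β α ((1 - α) / β)

/-- The kneading invariant `k₋` of `(β,α)`. -/
def kMinus (β α : ℝ) : ℕ → Bool := tauNeg β α ((1 - α) / β)

/-- The kneading space `Ω_{β,α}`. -/
def OmegaSet (β α : ℝ) : Set (ℕ → Bool) :=
  (tauPos β α '' Set.Icc 0 1) ∪ (tauNeg β α '' Set.Icc 0 1)

/-- `Ω` is a subshift of finite type: there is a finite set of finite forbidden words
such that `Ω` is exactly the set of sequences avoiding them. -/
def IsSFT (Ω : Set (ℕ → Bool)) : Prop :=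
  ∃ F : Finset (List Bool),
    Ω = {ω | ∀ m n : ℕ, List.ofFn (fun i : Fin n => ω (m + i)) ∉ F}

/-- `T_{β,α}` has matching. -/
def HasMatching (β α : ℝ) : Prop :=
  ∃ n : ℕ, (Tpos β α)^[n] 0 = (Tneg β α)^[n] 1

/-- The matching time: the smallest `n` with `(T⁺)ⁿ(0) = (T⁻)ⁿ(1)`. -/
def matchingTime (β α : ℝ) : ℕ :=
  sInf {n : ℕ | (Tpos β α)^[n] 0 = (Tneg β α)^[n] 1}

/-- `T_{β,α}` and `T_{β,α'}` have the same matching: both have matching, with the same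
matching time `n`, and their kneading invariants agree in the first `n+1` entries. -/
def SameMatching (β α α' : ℝ) : Prop :=
  HasMatching β α ∧ HasMatching β α' ∧ matchingTime β α = matchingTime β α' ∧
    ∀ i ≤ matchingTime β α, kPlus β α i = kPlus β α' i ∧ kMinus β α i = kMinus β α' i

/-- The matching set `I(β,α)` (a subset of `(0, 2-β)`). -/
def matchInterval (β α : ℝ) : Set ℝ :=
  {α' | α' ∈ Set.Ioo (0 : ℝ) (2 - β) ∧ SameMatching β α α'}

/-- The parameter region `Δ`. -/
def DeltaSet : Set (ℝ × ℝ) :=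
  {p | p.1 ∈ Set.Ioo (1 : ℝ) 2 ∧ p.2 ∈ Set.Ioo (0 : ℝ) (2 - p.1)}

/-- A sequence in `{0,1}^ℕ` is periodic. -/
def IsPeriodicSeq (ω : ℕ → Bool) : Prop :=
  ∃ p : ℕ, 1 ≤ p ∧ ∀ n, ω (n + p) = ω n

/-- A sequence in `{0,1}^ℕ` is eventually periodic. -/
def IsEvPeriodicSeq (ω : ℕ → Bool) : Prop :=
  ∃ k : ℕ, IsPeriodicSeq (fun n => ω (n + k))

/-- Strict lexicographic order on `{0,1}^ℕ`: at the first index where they differ,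
`ω` has entry 0 and `ν` has entry 1. -/
def lexLt (ω ν : ℕ → Bool) : Prop :=
  ∃ n : ℕ, (∀ m < n, ω m = ν m) ∧ ω n = false ∧ ν n = true


namespace Aux

/-- critical point -/
noncomputable def cc (β α : ℝ) : ℝ := (1 - α) / β
/-- orbit of 0 under T⁺ -/
noncomputable def oa (β α : ℝ) (m : ℕ) : ℝ := (Tpos β α)^[m] 0
/-- orbit of 1 under T⁻ -/
noncomputable def ob (β α : ℝ) (m : ℕ) : ℝ := (Tneg β α)^[m] 1
/-- digit of orbit of 0 (real-valued) -/
noncomputable def dE (β α : ℝ) (m : ℕ) : ℝ := if oa β α m < cc β α then 0 else 1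
/-- digit of orbit of 1 (real-valued) -/
noncomputable def dF (β α : ℝ) (m : ℕ) : ℝ := if ob β α m ≤ cc β α then 0 else 1
/-- geometric sum -/
noncomputable def Sg (β : ℝ) (m : ℕ) : ℝ := ∑ i ∈ Finset.range m, β ^ i

section basic

variable {β α : ℝ} (hb1 : 1 < β) (hb2 : β < 2) (ha1 : 0 ≤ α) (ha2 : α < 2 - β)

include hb1 ha2 in
lemma cc_pos : 0 < cc β α := by
  have : 0 < 1 - α := by nlinarith
  exact div_pos this (by linarith)

include hb1 ha1 in
lemma cc_lt_one : cc β α < 1 := by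
  rw [cc, div_lt_one (by linarith)]; linarith

lemma oa_zero : oa β α 0 = 0 := rfl
lemma ob_zero : ob β α 0 = 1 := rfl

lemma oa_succ (m : ℕ) : oa β α (m + 1) = Tpos β α (oa β α m) := by
  rw [oa, Function.iterate_succ_apply']; rfl

lemma ob_succ (m : ℕ) : ob β α (m + 1) = Tneg β α (ob β α m) := by
  rw [ob, Function.iterate_succ_apply']; rfl

include hb1 hb2 ha1 ha2 in
lemma tpos_eq {x : ℝ} (hx0 : 0 ≤ x) (hx1 : x < 1) :
    Tpos β α x = β * x + α - (if x < cc β α then 0 else 1) := by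
  have hβ0 : (0:ℝ) < β := by linarith
  rcases eq_or_ne x (cc β α) with h | h
  · rw [Tpos, if_pos (by rw [h]; rfl), h, if_neg (lt_irrefl _)]
    rw [cc]; field_simp; ring
  · rw [Tpos, if_neg (by rw [cc] at h; exact h)]
    rcases lt_or_gt_of_ne h with hlt | hgt
    · rw [if_pos hlt, Int.fract_eq_self.mpr]
      · ring
      constructor
      · positivity
      · have : β * x + α < β * cc β α + α := by nlinarith
        have hc : β * cc β α = 1 - α := by rw [cc]; field_simp
        linarith
    · rw [if_neg (not_lt.mpr (le_of_lt hgt))]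
      have hc : β * cc β α = 1 - α := by rw [cc]; field_simp
      have h1 : (1:ℝ) ≤ β * x + α := by nlinarith
      have h2 : β * x + α < 2 := by nlinarith
      have : Int.fract (β * x + α) = β * x + α - 1 := by
        rw [Int.fract]
        have : ⌊β * x + α⌋ = 1 := by
          rw [Int.floor_eq_iff]
          norm_num
          exact ⟨h1, h2⟩
        rw [this]; norm_num
      rw [this]
  
include hb1 hb2 ha1 ha2 in
lemma tneg_eq {x : ℝ} (hx0 : 0 < x) (hx1 : x ≤ 1) :
    Tneg β α x = β * x + α - (if x ≤ cc β α then 0 else 1) := by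
  have hβ0 : (0:ℝ) < β := by linarith
  have hc : β * cc β α = 1 - α := by rw [cc]; field_simp
  rcases eq_or_ne x (cc β α) with h | h
  · rw [Tneg, if_pos (by rw [h]; rfl), if_pos (le_of_eq h), h]
    rw [sub_zero]
    linarith [hc]
  · rw [Tneg, if_neg (by rw [cc] at h; exact h)]
    rcases lt_or_gt_of_ne h with hlt | hgt
    · rw [if_pos (le_of_lt hlt), Int.fract_eq_self.mpr]
      · ring
      constructor
      · positivity
      · nlinarith
    · rw [if_neg (not_le.mpr hgt)]
      have h1 : (1:ℝ) ≤ β * x + α := by nlinarith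
      have h2 : β * x + α < 2 := by nlinarith
      have : Int.fract (β * x + α) = β * x + α - 1 := by
        rw [Int.fract]
        have : ⌊β * x + α⌋ = 1 := by
          rw [Int.floor_eq_iff]
          norm_num
          exact ⟨h1, h2⟩
        rw [this]; norm_num
      rw [this]

include hb1 hb2 ha1 ha2 in
lemma oa_mem (m : ℕ) : 0 ≤ oa β α m ∧ oa β α m < 1 := by
  induction m with
  | zero => simp [oa_zero]
  | succ m ih =>
    rcases ih with ⟨h0, h1⟩
    rw [oa_succ, tpos_eq hb1 hb2 ha1 ha2 h0 h1]
    have hc : β * cc β α = 1 - α := by rw [cc]; field_simp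
    by_cases h : oa β α m < cc β α
    · rw [if_pos h]
      constructor
      · nlinarith
      · nlinarith
    · rw [if_neg h]
      push_neg at h
      constructor
      · nlinarith
      · nlinarith

include hb1 hb2 ha1 ha2 in
lemma ob_mem (m : ℕ) : 0 < ob β α m ∧ ob β α m ≤ 1 := by
  induction m with
  | zero => simp [ob_zero]
  | succ m ih =>
    rcases ih with ⟨h0, h1⟩
    rw [ob_succ, tneg_eq hb1 hb2 ha1 ha2 h0 h1]
    have hc : β * cc β α = 1 - α := by rw [cc]; field_simp
    by_cases h : ob β α m ≤ cc β α
    · rw [if_pos h]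
      constructor
      · nlinarith
      · nlinarith
    · rw [if_neg h]
      push_neg at h
      constructor
      · nlinarith
      · nlinarith

include hb1 hb2 ha1 ha2 in
lemma oa_succ_eq (m : ℕ) : oa β α (m + 1) = β * oa β α m + α - dE β α m := by
  rcases oa_mem hb1 hb2 ha1 ha2 (α := α) m with ⟨h0, h1⟩
  rw [oa_succ, tpos_eq hb1 hb2 ha1 ha2 h0 h1, dE]

include hb1 hb2 ha1 ha2 in
lemma ob_succ_eq (m : ℕ) : ob β α (m + 1) = β * ob β α m + α - dF β α m := by
  rcases ob_mem hb1 hb2 ha1 ha2 (α := α) m with ⟨h0, h1⟩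
  rw [ob_succ, tneg_eq hb1 hb2 ha1 ha2 h0 h1, dF]

lemma tie_a (m : ℕ) (h : oa β α m = cc β α) : oa β α (m + 1) = 0 := by
  rw [oa_succ, Tpos, if_pos (by rw [h]; rfl)]

lemma tie_b (m : ℕ) (h : ob β α m = cc β α) : ob β α (m + 1) = 1 := by
  rw [ob_succ, Tneg, if_pos (by rw [h]; rfl)]

include hb1 hb2 ha2 in
lemma lemZ (ha1' : 0 < α) (m : ℕ) (h : oa β α (m + 1) = 0) : oa β α m = cc β α := by
  have h0 := oa_mem hb1 hb2 (le_of_lt ha1') ha2 (α := α) m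
  rw [oa_succ_eq hb1 hb2 (le_of_lt ha1') ha2] at h
  rw [dE] at h
  by_cases hlt : oa β α m < cc β α
  · rw [if_pos hlt] at h; nlinarith [h0.1]
  · rw [if_neg hlt] at h
    rw [cc]; rw [eq_div_iff (by linarith : β ≠ 0)]; linarith

include hb1 hb2 ha1 ha2 in
lemma lemZ' (m : ℕ) (h : ob β α (m + 1) = 1) : ob β α m = cc β α := by
  have h0 := ob_mem hb1 hb2 ha1 ha2 (α := α) m
  rw [ob_succ_eq hb1 hb2 ha1 ha2] at h
  rw [dF] at h
  by_cases hle : ob β α m ≤ cc β α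
  · rw [if_pos hle] at h
    rw [cc]; rw [eq_div_iff (by linarith : β ≠ 0)]; linarith
  · rw [if_neg hle] at h; nlinarith [h0.2]

lemma TposTneg {x : ℝ} (h : x ≠ cc β α) : Tpos β α x = Tneg β α x := by
  rw [Tpos, Tneg, if_neg (by rw [cc] at h; exact h), if_neg (by rw [cc] at h; exact h)]

end basic
end Aux

namespace Aux

/-- digit prefix agreement -/
def DigEq (β α α' : ℝ) (n : ℕ) : Prop :=
  ∀ m < n, dE β α m = dE β α' m ∧ dF β α m = dF β α' m

section knead

variable {β α α' : ℝ}

lemma iterPos_c (m : ℕ) : (Tpos β α)^[m+1] ((1-α)/β) = oa β α m := by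
  rw [Function.iterate_succ_apply]
  have h : Tpos β α ((1-α)/β) = 0 := by rw [Tpos, if_pos rfl]
  rw [h]; rfl

lemma iterNeg_c (m : ℕ) : (Tneg β α)^[m+1] ((1-α)/β) = ob β α m := by
  rw [Function.iterate_succ_apply]
  have h : Tneg β α ((1-α)/β) = 1 := by rw [Tneg, if_pos rfl]
  rw [h]; rfl

lemma kPlus_succ (m : ℕ) :
    kPlus β α (m+1) = if oa β α m < cc β α then false else true := by
  show (if (Tpos β α)^[m+1] ((1-α)/β) < (1-α)/β then false else true) = _
  rw [iterPos_c]; rfl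

lemma kMinus_succ (m : ℕ) :
    kMinus β α (m+1) = if ob β α m ≤ cc β α then false else true := by
  show (if (Tneg β α)^[m+1] ((1-α)/β) ≤ (1-α)/β then false else true) = _
  rw [iterNeg_c]; rfl

lemma kPlus_zero : kPlus β α 0 = true := by
  show (if (Tpos β α)^[0] ((1-α)/β) < (1-α)/β then false else true) = true
  simp

lemma kMinus_zero : kMinus β α 0 = false := by
  show (if (Tneg β α)^[0] ((1-α)/β) ≤ (1-α)/β then false else true) = false
  simp

lemma dE_eq_iff (m : ℕ) :
    dE β α m = dE β α' m ↔ kPlus β α (m+1) = kPlus β α' (m+1) := by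
  rw [kPlus_succ, kPlus_succ, dE, dE]
  by_cases h1 : oa β α m < cc β α <;> by_cases h2 : oa β α' m < cc β α' <;>
    simp [h1, h2]

lemma dF_eq_iff (m : ℕ) :
    dF β α m = dF β α' m ↔ kMinus β α (m+1) = kMinus β α' (m+1) := by
  rw [kMinus_succ, kMinus_succ, dF, dF]
  by_cases h1 : ob β α m ≤ cc β α <;> by_cases h2 : ob β α' m ≤ cc β α' <;>
    simp [h1, h2]

lemma dE_zero_iff (m : ℕ) : dE β α m = 0 ↔ oa β α m < cc β α := by
  rw [dE]; by_cases h : oa β α m < cc β α <;> simp [h]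

lemma dE_one_iff (m : ℕ) : dE β α m = 1 ↔ cc β α ≤ oa β α m := by
  rw [dE]; by_cases h : oa β α m < cc β α
  · simp only [if_pos h]
    constructor
    · intro h'; norm_num at h'
    · intro h'; linarith
  · simp only [if_neg h]
    simp [not_lt.mp h]

lemma dF_zero_iff (m : ℕ) : dF β α m = 0 ↔ ob β α m ≤ cc β α := by
  rw [dF]; by_cases h : ob β α m ≤ cc β α <;> simp [h]

lemma dF_one_iff (m : ℕ) : dF β α m = 1 ↔ cc β α < ob β α m := by
  rw [dF]; by_cases h : ob β α m ≤ cc β α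
  · simp only [if_pos h]
    constructor
    · intro h'; norm_num at h'
    · intro h'; linarith
  · simp only [if_neg h]
    simp [not_le.mp h]

lemma dE_cases (m : ℕ) : dE β α m = 0 ∨ dE β α m = 1 := by
  rw [dE]; by_cases h : oa β α m < cc β α <;> simp [h]

lemma dF_cases (m : ℕ) : dF β α m = 0 ∨ dF β α m = 1 := by
  rw [dF]; by_cases h : ob β α m ≤ cc β α <;> simp [h]

end knead

section sg

variable {β : ℝ}

lemma Sg_zero : Sg β 0 = 0 := by simp [Sg]

lemma Sg_add (m p : ℕ) : Sg β (m + p) = Sg β m + β ^ m * Sg β p := by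
  rw [Sg, Sg, Sg, Finset.sum_range_add, Finset.mul_sum]
  congr 1
  apply Finset.sum_congr rfl
  intro i _
  rw [pow_add]

lemma Sg_one : Sg β 1 = 1 := by simp [Sg]

lemma Sg_succ (m : ℕ) : Sg β (m+1) = β * Sg β m + 1 := by
  rw [Nat.add_comm, Sg_add, Sg_one]; ring

lemma Sg_nonneg (hb : 0 < β) (m : ℕ) : 0 ≤ Sg β m := by
  apply Finset.sum_nonneg; intro i _; positivity

end sg

section affine

variable {β t α' : ℝ} (hb1 : 1 < β) (hb2 : β < 2)
  (ht1 : 0 ≤ t) (ht2 : t < 2 - β) (hs1 : 0 ≤ α') (hs2 : α' < 2 - β)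

include hb1 hb2 ht1 ht2 hs1 hs2 in
lemma aAff : ∀ m : ℕ, (∀ k < m, dE β t k = dE β α' k) →
    oa β α' m - oa β t m = Sg β m * (α' - t) := by
  intro m
  induction m with
  | zero => intro _; simp [oa_zero, Sg_zero]
  | succ m ih =>
    intro he
    have ihm := ih (fun k hk => he k (Nat.lt_succ_of_lt hk))
    rw [oa_succ_eq hb1 hb2 hs1 hs2, oa_succ_eq hb1 hb2 ht1 ht2,
      he m (Nat.lt_succ_self m), Sg_succ]
    ring_nf
    nlinarith [ihm]

include hb1 hb2 ht1 ht2 hs1 hs2 in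
lemma bAff : ∀ m : ℕ, (∀ k < m, dF β t k = dF β α' k) →
    ob β α' m - ob β t m = Sg β m * (α' - t) := by
  intro m
  induction m with
  | zero => intro _; simp [ob_zero, Sg_zero]
  | succ m ih =>
    intro he
    have ihm := ih (fun k hk => he k (Nat.lt_succ_of_lt hk))
    rw [ob_succ_eq hb1 hb2 hs1 hs2, ob_succ_eq hb1 hb2 ht1 ht2,
      he m (Nat.lt_succ_self m), Sg_succ]
    ring_nf
    nlinarith [ihm]

include hb1 in
lemma cc_diff : cc β α' - cc β t = -((α' - t) / β) := by
  rw [cc, cc]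
  field_simp
  ring

include hb1 hb2 ht1 ht2 hs1 hs2 in
lemma acmp (m : ℕ) (he : ∀ k < m, dE β t k = dE β α' k) :
    oa β α' m - cc β α' = (oa β t m - cc β t) + (Sg β m + 1/β) * (α' - t) := by
  have h1 := aAff hb1 hb2 ht1 ht2 hs1 hs2 m he
  have h2 := cc_diff (t := t) (α' := α') hb1
  have hβ : (0:ℝ) < β := by linarith
  field_simp at h2 ⊢
  nlinarith [h1, h2]

include hb1 hb2 ht1 ht2 hs1 hs2 in
lemma bcmp (m : ℕ) (he : ∀ k < m, dF β t k = dF β α' k) :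
    ob β α' m - cc β α' = (ob β t m - cc β t) + (Sg β m + 1/β) * (α' - t) := by
  have h1 := bAff hb1 hb2 ht1 ht2 hs1 hs2 m he
  have h2 := cc_diff (t := t) (α' := α') hb1
  have hβ : (0:ℝ) < β := by linarith
  field_simp at h2 ⊢
  nlinarith [h1, h2]

include hb1 in
lemma slope_pos (m : ℕ) : 0 < Sg β m + 1/β := by
  have := Sg_nonneg (by linarith : (0:ℝ) < β) (β := β) m
  have : (0:ℝ) < 1/β := by positivity
  linarith [Sg_nonneg (by linarith : (0:ℝ) < β) (β := β) m]

include hb1 hb2 ht1 ht2 hs1 hs2 in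
lemma delta_eq (n : ℕ) (h : DigEq β t α' n) :
    ∀ m ≤ n, ob β α' m - oa β α' m = ob β t m - oa β t m := by
  intro m
  induction m with
  | zero => intro _; simp [oa_zero, ob_zero]
  | succ m ih =>
    intro hm
    have ihm := ih (le_of_lt (Nat.lt_of_succ_le hm))
    rw [oa_succ_eq hb1 hb2 hs1 hs2, ob_succ_eq hb1 hb2 hs1 hs2,
      oa_succ_eq hb1 hb2 ht1 ht2, ob_succ_eq hb1 hb2 ht1 ht2,
      (h m (Nat.lt_of_succ_le hm)).1, (h m (Nat.lt_of_succ_le hm)).2]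
    ring_nf
    nlinarith [ihm]

end affine

end Aux

namespace Aux

section matching

variable {β α α' α₁ α₂ : ℝ} (hb1 : 1 < β) (hb2 : β < 2)

lemma mt_match (hM : HasMatching β α) :
    oa β α (matchingTime β α) = ob β α (matchingTime β α) :=
  Nat.sInf_mem (hM : ∃ n, (Tpos β α)^[n] (0:ℝ) = (Tneg β α)^[n] 1)

lemma mt_min {m : ℕ} (hm : m < matchingTime β α) : oa β α m ≠ ob β α m :=
  Nat.notMem_of_lt_sInf hm

lemma mt_eq {n : ℕ} (h1 : oa β α n = ob β α n) (h2 : ∀ m < n, oa β α m ≠ ob β α m) :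
    matchingTime β α = n := by
  apply le_antisymm (Nat.sInf_le h1)
  by_contra h
  push_neg at h
  exact h2 _ h (Nat.sInf_mem (⟨n, h1⟩ : ∃ k, (Tpos β α)^[k] (0:ℝ) = (Tneg β α)^[k] 1))

lemma mt_pos (hM : HasMatching β α) : 0 < matchingTime β α := by
  rcases Nat.eq_zero_or_pos (matchingTime β α) with h | h
  · exfalso
    have := mt_match hM
    rw [h, oa_zero, ob_zero] at this
    norm_num at this
  · exact h

include hb1 hb2 in
lemma mem_class_iff (hs : α ∈ Set.Ioo (0:ℝ) (2 - β)) (hM : HasMatching β α)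
    (hs' : α' ∈ Set.Ioo (0:ℝ) (2 - β)) :
    α' ∈ matchInterval β α ↔ DigEq β α α' (matchingTime β α) := by
  constructor
  · rintro ⟨-, -, -, -, hk⟩
    intro m hm
    have h := hk (m+1) (by omega)
    exact ⟨(dE_eq_iff m).mpr h.1, (dF_eq_iff m).mpr h.2⟩
  · intro h
    set n := matchingTime β α with hn
    have hδ := delta_eq hb1 hb2 (le_of_lt hs.1) hs.2 (le_of_lt hs'.1) hs'.2 n h
    have hmatch : oa β α' n = ob β α' n := by
      have h1 := mt_match (β := β) (α := α) hM
      have h2 := hδ n le_rfl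
      rw [← h1] at h2
      linarith
    have hmin : ∀ m < n, oa β α' m ≠ ob β α' m := by
      intro m hm heq
      have h2 := hδ m (le_of_lt hm)
      rw [heq] at h2
      exact mt_min hm (by linarith)
    have hM' : HasMatching β α' := ⟨n, hmatch⟩
    have hmt' : matchingTime β α' = n := mt_eq hmatch hmin
    refine ⟨hs', hM, hM', by rw [hmt'], ?_⟩
    intro i hi
    match i with
    | 0 => exact ⟨by rw [kPlus_zero, kPlus_zero], by rw [kMinus_zero, kMinus_zero]⟩
    | (m+1) =>
      have hm : m < n := by omega
      exact ⟨(dE_eq_iff m).mp (h m hm).1, (dF_eq_iff m).mp (h m hm).2⟩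

include hb1 hb2 in
lemma class_self (hs : α ∈ Set.Ioo (0:ℝ) (2 - β)) (hM : HasMatching β α) :
    α ∈ matchInterval β α :=
  (mem_class_iff hb1 hb2 hs hM hs).mpr (fun _ _ => ⟨rfl, rfl⟩)

include hb1 hb2 in
lemma class_eq (hs1 : α₁ ∈ Set.Ioo (0:ℝ) (2 - β)) (hM1 : HasMatching β α₁)
    (hs2 : α₂ ∈ Set.Ioo (0:ℝ) (2 - β)) (hM2 : HasMatching β α₂)
    (hd : DigEq β α₁ α₂ (matchingTime β α₁)) :
    matchInterval β α₁ = matchInterval β α₂ := by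
  have h2 : α₂ ∈ matchInterval β α₁ := (mem_class_iff hb1 hb2 hs1 hM1 hs2).mpr hd
  have hmt : matchingTime β α₁ = matchingTime β α₂ := h2.2.2.2.1
  ext α''
  constructor
  · intro h''
    have hs'' : α'' ∈ Set.Ioo (0:ℝ) (2 - β) := h''.1
    have hd'' := (mem_class_iff hb1 hb2 hs1 hM1 hs'').mp h''
    apply (mem_class_iff hb1 hb2 hs2 hM2 hs'').mpr
    intro m hm
    rw [← hmt] at hm
    exact ⟨(hd m hm).1 ▸ (hd'' m hm).1, (hd m hm).2 ▸ (hd'' m hm).2⟩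
  · intro h''
    have hs'' : α'' ∈ Set.Ioo (0:ℝ) (2 - β) := h''.1
    have hd'' := (mem_class_iff hb1 hb2 hs2 hM2 hs'').mp h''
    apply (mem_class_iff hb1 hb2 hs1 hM1 hs'').mpr
    intro m hm
    have hm2 : m < matchingTime β α₂ := by rw [← hmt]; exact hm
    exact ⟨(hd m hm).1.trans (hd'' m hm2).1, (hd m hm).2.trans (hd'' m hm2).2⟩

include hb1 hb2 in
lemma classes_disj (hs1 : α₁ ∈ Set.Ioo (0:ℝ) (2 - β)) (hM1 : HasMatching β α₁)
    (hs2 : α₂ ∈ Set.Ioo (0:ℝ) (2 - β)) (hM2 : HasMatching β α₂)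
    (hne : matchInterval β α₁ ≠ matchInterval β α₂)
    {x : ℝ} (hx1 : x ∈ matchInterval β α₁) (hx2 : x ∈ matchInterval β α₂) : False := by
  apply hne
  have hsx : x ∈ Set.Ioo (0:ℝ) (2 - β) := hx1.1
  have hmtx1 : matchingTime β α₁ = matchingTime β x := hx1.2.2.2.1
  have hmtx2 : matchingTime β α₂ = matchingTime β x := hx2.2.2.2.1
  have hd1 := (mem_class_iff hb1 hb2 hs1 hM1 hsx).mp hx1
  have hd2 := (mem_class_iff hb1 hb2 hs2 hM2 hsx).mp hx2
  apply class_eq hb1 hb2 hs1 hM1 hs2 hM2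
  intro m hm
  have hm2 : m < matchingTime β α₂ := by omega
  exact ⟨(hd1 m hm).1.trans ((hd2 m hm2).1).symm, (hd1 m hm).2.trans ((hd2 m hm2).2).symm⟩

include hb1 hb2 in
lemma class_convex (hs : α ∈ Set.Ioo (0:ℝ) (2 - β)) (hM : HasMatching β α)
    {x y z : ℝ} (hx : x ∈ matchInterval β α) (hy : y ∈ matchInterval β α)
    (hxz : x ≤ z) (hzy : z ≤ y) : z ∈ matchInterval β α := by
  have hsx : x ∈ Set.Ioo (0:ℝ) (2 - β) := hx.1
  have hsy : y ∈ Set.Ioo (0:ℝ) (2 - β) := hy.1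
  have hsz : z ∈ Set.Ioo (0:ℝ) (2 - β) := ⟨lt_of_lt_of_le hsx.1 hxz, lt_of_le_of_lt hzy hsy.2⟩
  have hdx := (mem_class_iff hb1 hb2 hs hM hsx).mp hx
  have hdy := (mem_class_iff hb1 hb2 hs hM hsy).mp hy
  apply (mem_class_iff hb1 hb2 hs hM hsz).mpr
  set n := matchingTime β α with hn
  -- strong induction: digits of z agree with α's up to n
  suffices H : ∀ m ≤ n, DigEq β α z m by exact H n le_rfl
  intro m
  induction m with
  | zero => intro _ k hk; omega
  | succ m ih =>
    intro hm
    have ihm := ih (le_of_lt (Nat.lt_of_succ_le hm))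
    intro k hk
    rcases Nat.lt_or_ge k m with hkm | hkm
    · exact ihm k hkm
    · have hkm' : k = m := by omega
      subst hkm'
      have hkn : k < n := Nat.lt_of_succ_le hm
      -- digits of x, z agree below k ; digits of z, y agree below k
      have hxza : ∀ j < k, dE β x j = dE β z j :=
        fun j hj => ((hdx j (by omega)).1.symm.trans (ihm j hj).1)
      have hxzb : ∀ j < k, dF β x j = dF β z j :=
        fun j hj => ((hdx j (by omega)).2.symm.trans (ihm j hj).2)
      have hzya : ∀ j < k, dE β z j = dE β y j :=
        fun j hj => ((ihm j hj).1.symm.trans (hdy j (by omega)).1)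
      have hzyb : ∀ j < k, dF β z j = dF β y j :=
        fun j hj => ((ihm j hj).2.symm.trans (hdy j (by omega)).2)
      have hax := acmp hb1 hb2 (le_of_lt hsx.1) hsx.2 (le_of_lt hsz.1) hsz.2 k hxza
      have hay := acmp hb1 hb2 (le_of_lt hsz.1) hsz.2 (le_of_lt hsy.1) hsy.2 k hzya
      have hbx := bcmp hb1 hb2 (le_of_lt hsx.1) hsx.2 (le_of_lt hsz.1) hsz.2 k hxzb
      have hby := bcmp hb1 hb2 (le_of_lt hsz.1) hsz.2 (le_of_lt hsy.1) hsy.2 k hzyb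
      have hsl := slope_pos (β := β) hb1 k
      constructor
      · rcases dE_cases (β := β) (α := α) k with h0 | h1
        · -- α-digit is 0, so is y's; conclude for z using y-side
          have hy0 : oa β y k < cc β y := (dE_zero_iff k).mp ((hdy k hkn).1 ▸ h0)
          have hz0 : oa β z k < cc β z := by nlinarith
          rw [h0, (dE_zero_iff k).mpr hz0]
        · have hx1' : cc β x ≤ oa β x k := (dE_one_iff k).mp ((hdx k hkn).1 ▸ h1)
          have hz1 : cc β z ≤ oa β z k := by nlinarith
          rw [h1, (dE_one_iff k).mpr hz1]
      · rcases dF_cases (β := β) (α := α) k with h0 | h1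
        · have hy0 : ob β y k ≤ cc β y := (dF_zero_iff k).mp ((hdy k hkn).2 ▸ h0)
          have hz0 : ob β z k ≤ cc β z := by nlinarith
          rw [h0, (dF_zero_iff k).mpr hz0]
        · have hx1' : cc β x < ob β x k := (dF_one_iff k).mp ((hdx k hkn).2 ▸ h1)
          have hz1 : cc β z < ob β z k := by nlinarith
          rw [h1, (dF_one_iff k).mpr hz1]

end matching

end Aux

namespace Aux

section dyn

variable {β α t : ℝ}

lemma oa_prop (u v : ℕ) (h : oa β α u = oa β α v) (k : ℕ) :
    oa β α (u + k) = oa β α (v + k) := by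
  rw [oa, oa, Nat.add_comm u k, Nat.add_comm v k, Function.iterate_add_apply,
    Function.iterate_add_apply]
  exact congrArg _ h

lemma ob_prop (u v : ℕ) (h : ob β α u = ob β α v) (k : ℕ) :
    ob β α (u + k) = ob β α (v + k) := by
  rw [ob, ob, Nat.add_comm u k, Nat.add_comm v k, Function.iterate_add_apply,
    Function.iterate_add_apply]
  exact congrArg _ h

lemma oa_period_mul {P : ℕ} (hP : ∀ m, oa β α (m + P) = oa β α m) :
    ∀ k m, oa β α (m + k * P) = oa β α m := by
  intro k
  induction k with
  | zero => intro m; simp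
  | succ k ih =>
    intro m
    have : m + (k+1) * P = (m + P) + k * P := by ring
    rw [this, ih (m + P), hP m]

lemma ob_period_mul {P : ℕ} (hP : ∀ m, ob β α (m + P) = ob β α m) :
    ∀ k m, ob β α (m + k * P) = ob β α m := by
  intro k
  induction k with
  | zero => intro m; simp
  | succ k ih =>
    intro m
    have : m + (k+1) * P = (m + P) + k * P := by ring
    rw [this, ih (m + P), hP m]

lemma oa_propagate {P p m₀ : ℕ} (hP1 : 1 ≤ P)
    (hP : ∀ m, oa β α (m + P) = oa β α m) (h : oa β α (m₀ + p) = oa β α m₀) :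
    ∀ m, oa β α (m + p) = oa β α m := by
  intro m
  have hge : m₀ ≤ m + m₀ * P := by
    have h1 : m₀ * 1 ≤ m₀ * P := Nat.mul_le_mul_left m₀ hP1
    omega
  obtain ⟨d, hd⟩ : ∃ d, m + m₀ * P = m₀ + d := ⟨m + m₀ * P - m₀, by omega⟩
  have e1 : oa β α (m + p) = oa β α ((m + p) + m₀ * P) := (oa_period_mul hP m₀ (m+p)).symm
  have e2 : (m + p) + m₀ * P = (m₀ + p) + d := by omega
  have e3 := oa_prop (m₀ + p) m₀ h d
  have e4 : m₀ + d = m + m₀ * P := hd.symm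
  rw [e1, e2, e3, e4, oa_period_mul hP m₀ m]

lemma ob_propagate {P p m₀ : ℕ} (hP1 : 1 ≤ P)
    (hP : ∀ m, ob β α (m + P) = ob β α m) (h : ob β α (m₀ + p) = ob β α m₀) :
    ∀ m, ob β α (m + p) = ob β α m := by
  intro m
  have hge : m₀ ≤ m + m₀ * P := by
    have h1 : m₀ * 1 ≤ m₀ * P := Nat.mul_le_mul_left m₀ hP1
    omega
  obtain ⟨d, hd⟩ : ∃ d, m + m₀ * P = m₀ + d := ⟨m + m₀ * P - m₀, by omega⟩
  have e1 : ob β α (m + p) = ob β α ((m + p) + m₀ * P) := (ob_period_mul hP m₀ (m+p)).symm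
  have e2 : (m + p) + m₀ * P = (m₀ + p) + d := by omega
  have e3 := ob_prop (m₀ + p) m₀ h d
  have e4 : m₀ + d = m + m₀ * P := hd.symm
  rw [e1, e2, e3, e4, ob_period_mul hP m₀ m]

lemma a_period_of_tie {i : ℕ} (htie : oa β α i = cc β α) :
    ∀ m, oa β α (m + (i+1)) = oa β α m := by
  have h0 : oa β α (i+1) = oa β α 0 := by rw [tie_a i htie, oa_zero]
  intro m
  have := oa_prop (i+1) 0 h0 m
  rw [Nat.add_comm (i+1) m] at this
  rw [this]
  norm_num

lemma b_period_of_tie {j : ℕ} (htie : ob β α j = cc β α) :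
    ∀ m, ob β α (m + (j+1)) = ob β α m := by
  have h0 : ob β α (j+1) = ob β α 0 := by rw [tie_b j htie, ob_zero]
  intro m
  have := ob_prop (j+1) 0 h0 m
  rw [Nat.add_comm (j+1) m] at this
  rw [this]
  norm_num

lemma ob_tie_iff {j : ℕ} (hfirst : ∀ m < j, ob β α m ≠ cc β α)
    (htie : ob β α j = cc β α) :
    ∀ m, ob β α m = cc β α ↔ m % (j+1) = j := by
  have hper := b_period_of_tie htie
  intro m
  constructor
  · intro h
    have hmod : ob β α (m % (j+1)) = cc β α := by
      have hrepr : m % (j+1) + m / (j+1) * (j+1) = m := Nat.mod_add_div' m (j+1)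
      have := ob_period_mul hper (m / (j+1)) (m % (j+1))
      rw [hrepr] at this
      rw [← this]; exact h
    have hlt : m % (j+1) < j + 1 := Nat.mod_lt _ (by omega)
    by_contra hne
    exact hfirst _ (by omega) hmod
  · intro h
    have hrepr : m % (j+1) + m / (j+1) * (j+1) = m := Nat.mod_add_div' m (j+1)
    have := ob_period_mul hper (m / (j+1)) (m % (j+1))
    rw [hrepr] at this
    rw [this, h]
    exact htie

lemma oa_tie_iff {i : ℕ} (hfirst : ∀ m < i, oa β α m ≠ cc β α)
    (htie : oa β α i = cc β α) :
    ∀ m, oa β α m = cc β α ↔ m % (i+1) = i := by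
  have hper := a_period_of_tie htie
  intro m
  constructor
  · intro h
    have hmod : oa β α (m % (i+1)) = cc β α := by
      have hrepr : m % (i+1) + m / (i+1) * (i+1) = m := Nat.mod_add_div' m (i+1)
      have := oa_period_mul hper (m / (i+1)) (m % (i+1))
      rw [hrepr] at this
      rw [← this]; exact h
    have hlt : m % (i+1) < i + 1 := Nat.mod_lt _ (by omega)
    by_contra hne
    exact hfirst _ (by omega) hmod
  · intro h
    have hrepr : m % (i+1) + m / (i+1) * (i+1) = m := Nat.mod_add_div' m (i+1)
    have := oa_period_mul hper (m / (i+1)) (m % (i+1))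
    rw [hrepr] at this
    rw [this, h]
    exact htie

lemma exists_first_res (p j N : ℕ) (hj : j < p) :
    ∃ m₁, N ≤ m₁ ∧ m₁ % p = j ∧ ∀ m, N ≤ m → m < m₁ → m % p ≠ j := by
  have hmem : (N * p + j) ∈ {m | N ≤ m ∧ m % p = j} := by
    constructor
    · have : N * 1 ≤ N * p := Nat.mul_le_mul_left N (by omega)
      omega
    · show (N * p + j) % p = j
      rw [Nat.mul_comm, Nat.mul_add_mod]
      exact Nat.mod_eq_of_lt hj
  have hne : {m | N ≤ m ∧ m % p = j}.Nonempty := ⟨_, hmem⟩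
  refine ⟨sInf {m | N ≤ m ∧ m % p = j}, (Nat.sInf_mem hne).1, (Nat.sInf_mem hne).2, ?_⟩
  intro m hNm hlt hmod
  exact Nat.notMem_of_lt_sInf hlt ⟨hNm, hmod⟩

lemma joint_orbit {N M : ℕ} (hNM : N ≤ M) (hstart : oa β t N = ob β t N)
    (hnotie : ∀ m, N ≤ m → m < M → ob β t m ≠ cc β t) :
    oa β t M = ob β t M := by
  induction M, hNM using Nat.le_induction with
  | base => exact hstart
  | succ M hNM ih =>
    have ihM := ih (fun m hm hm' => hnotie m hm (by omega))
    rw [oa_succ, ob_succ, ihM]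
    exact TposTneg (hnotie M hNM (by omega))

end dyn

end Aux

namespace Aux

section lemR

variable {β αs t : ℝ}

/-- Right-side endpoint lemma: if the matching class of `αs` has points arbitrarily close
to `t` from the right, then either `t` virtually belongs to the class (digit prefix agrees),
or the orbit of 1 at `t` hits the critical point at some first time `j < n`, with
the associated structural consequences. -/
lemma lemR (hb1 : 1 < β) (hb2 : β < 2)
    (hss : αs ∈ Set.Ioo (0:ℝ) (2 - β)) (hM : HasMatching β αs)
    (hts : t ∈ Set.Ioo (0:ℝ) (2 - β))
    (happ : ∀ ε > (0:ℝ), ∃ x ∈ matchInterval β αs, t < x ∧ x < t + ε) :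
    DigEq β αs t (matchingTime β αs) ∨
    ∃ j, j < matchingTime β αs ∧ ob β t j = cc β t ∧
      (∀ m < j, ob β t m ≠ cc β t) ∧
      (∀ m, 0 < m → m ≤ j → oa β t m ≠ ob β t m) ∧
      ∃ ms, ms + (j+1) = matchingTime β αs ∧ oa β t ms = oa β t (ms + (j+1)) := by
  set n := matchingTime β αs with hn
  have ht1 : (0:ℝ) ≤ t := le_of_lt hts.1
  have ht2 : t < 2 - β := hts.2
  have hβ0 : (0:ℝ) < β := by linarith
  -- digit data of class members
  have hxdig : ∀ x ∈ matchInterval β αs, DigEq β αs x n :=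
    fun x hx => (mem_class_iff hb1 hb2 hss hM hx.1).mp hx
  have hxIoo : ∀ x ∈ matchInterval β αs, (0:ℝ) ≤ x ∧ x < 2 - β :=
    fun x hx => ⟨le_of_lt hx.1.1, hx.1.2⟩
  -- Step 1 : e-digits of t agree with the class words all the way to n
  have HE : ∀ m, m < n → dE β t m = dE β αs m := by
    intro m
    induction m using Nat.strong_induction_on with
    | _ m IH =>
      intro hmn
      have hblw : ∀ k < m, dE β t k = dE β αs k := fun k hk => IH k hk (lt_trans hk hmn)
      have hsl := slope_pos (β := β) hb1 m
      rcases lt_or_ge (oa β t m) (cc β t) with hlt | hge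
      · set ε := (cc β t - oa β t m) / (Sg β m + 1/β) with hε
        have hε0 : 0 < ε := div_pos (by linarith) hsl
        obtain ⟨x, hxmem, hxt, hxε⟩ := happ ε hε0
        obtain ⟨hx1, hx2⟩ := hxIoo x hxmem
        have hagr : ∀ k < m, dE β t k = dE β x k :=
          fun k hk => (hblw k hk).trans (hxdig x hxmem k (lt_trans hk hmn)).1
        have hacm := acmp hb1 hb2 ht1 ht2 hx1 hx2 m hagr
        have hkey : (Sg β m + 1/β) * (x - t) < cc β t - oa β t m := by
          have := mul_lt_mul_of_pos_left (show x - t < ε by linarith) hsl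
          rw [hε, mul_div_cancel₀ _ (ne_of_gt hsl)] at this
          linarith
        have hxlt : oa β x m < cc β x := by linarith
        have h1 : dE β x m = 0 := (dE_zero_iff m).mpr hxlt
        have h2 : dE β αs m = 0 := ((hxdig x hxmem m hmn).1).trans h1
        rw [h2, (dE_zero_iff m).mpr hlt]
      · obtain ⟨x, hxmem, hxt, _⟩ := happ 1 one_pos
        obtain ⟨hx1, hx2⟩ := hxIoo x hxmem
        have hagr : ∀ k < m, dE β t k = dE β x k :=
          fun k hk => (hblw k hk).trans (hxdig x hxmem k (lt_trans hk hmn)).1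
        have hacm := acmp hb1 hb2 ht1 ht2 hx1 hx2 m hagr
        have hpos : 0 < (Sg β m + 1/β) * (x - t) := mul_pos hsl (by linarith)
        have hxge : cc β x ≤ oa β x m := by linarith
        have h1 : dE β x m = 1 := (dE_one_iff m).mpr hxge
        have h2 : dE β αs m = 1 := ((hxdig x hxmem m hmn).1).trans h1
        rw [h2, (dE_one_iff m).mpr hge]
  -- Case split on whether f-digits also fully agree
  by_cases hfull : ∀ m, m < n → dF β t m = dF β αs m
  · left
    intro m hm
    exact ⟨(HE m hm).symm, (hfull m hm).symm⟩
  · right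
    push_neg at hfull
    set S := {m | m < n ∧ dF β t m ≠ dF β αs m} with hS
    have hSne : S.Nonempty := by
      obtain ⟨m, h1, h2⟩ := hfull
      exact ⟨m, by rw [hS]; exact ⟨h1, h2⟩⟩
    set j := sInf S with hjdef
    have hjmem : j ∈ S := Nat.sInf_mem hSne
    rw [hS] at hjmem
    have hjn : j < n := hjmem.1
    have hjmis : dF β t j ≠ dF β αs j := hjmem.2
    have hFlow : ∀ m < j, dF β t m = dF β αs m := by
      intro m hm
      by_contra hcon
      have hmem : m ∈ S := by rw [hS]; exact ⟨lt_trans hm hjn, hcon⟩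
      exact Nat.notMem_of_lt_sInf hm hmem
    -- f-agreement between t and class members below j
    have hFagr : ∀ x ∈ matchInterval β αs, ∀ k < j, dF β t k = dF β x k :=
      fun x hx k hk => (hFlow k hk).trans (hxdig x hx k (lt_trans hk hjn)).2
    have hslj := slope_pos (β := β) hb1 j
    -- Step 2 : the orbit of 1 at t hits cc at time j
    have htie : ob β t j = cc β t := by
      rcases lt_trichotomy (ob β t j) (cc β t) with hlt | heq | hgt
      · exfalso
        set ε := (cc β t - ob β t j) / (Sg β j + 1/β) with hε
        have hε0 : 0 < ε := div_pos (by linarith) hslj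
        obtain ⟨x, hxmem, hxt, hxε⟩ := happ ε hε0
        obtain ⟨hx1, hx2⟩ := hxIoo x hxmem
        have hbcm := bcmp hb1 hb2 ht1 ht2 hx1 hx2 j (hFagr x hxmem)
        have hkey : (Sg β j + 1/β) * (x - t) < cc β t - ob β t j := by
          have := mul_lt_mul_of_pos_left (show x - t < ε by linarith) hslj
          rw [hε, mul_div_cancel₀ _ (ne_of_gt hslj)] at this
          linarith
        have hxlt : ob β x j ≤ cc β x := by linarith
        have h1 : dF β x j = 0 := (dF_zero_iff j).mpr hxlt
        have h2 : dF β αs j = 0 := ((hxdig x hxmem j hjn).2).trans h1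
        have h3 : dF β t j = 0 := (dF_zero_iff j).mpr (le_of_lt hlt)
        exact hjmis (h3.trans h2.symm)
      · exact heq
      · exfalso
        obtain ⟨x, hxmem, hxt, _⟩ := happ 1 one_pos
        obtain ⟨hx1, hx2⟩ := hxIoo x hxmem
        have hbcm := bcmp hb1 hb2 ht1 ht2 hx1 hx2 j (hFagr x hxmem)
        have hpos : 0 < (Sg β j + 1/β) * (x - t) := mul_pos hslj (by linarith)
        have hxgt : cc β x < ob β x j := by linarith
        have h1 : dF β x j = 1 := (dF_one_iff j).mpr hxgt
        have h2 : dF β αs j = 1 := ((hxdig x hxmem j hjn).2).trans h1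
        have h3 : dF β t j = 1 := (dF_one_iff j).mpr hgt
        exact hjmis (h3.trans h2.symm)
    have hFj : dF β αs j = 1 := by
      have h3 : dF β t j = 0 := (dF_zero_iff j).mpr (le_of_eq htie)
      rcases dF_cases (β := β) (α := αs) j with h | h
      · exact absurd (h3.trans h.symm) hjmis
      · exact h
    -- Step 3 : no earlier tie
    have hnotie : ∀ m < j, ob β t m ≠ cc β t := by
      intro m hm hcon
      obtain ⟨x, hxmem, hxt, _⟩ := happ 1 one_pos
      obtain ⟨hx1, hx2⟩ := hxIoo x hxmem
      have hbcm := bcmp hb1 hb2 ht1 ht2 hx1 hx2 m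
        (fun k hk => hFagr x hxmem k (lt_trans hk hm))
      have hslm := slope_pos (β := β) hb1 m
      have hpos : 0 < (Sg β m + 1/β) * (x - t) := mul_pos hslm (by linarith)
      have hxgt : cc β x < ob β x m := by
        rw [hcon] at hbcm; linarith
      have h1 : dF β x m = 1 := (dF_one_iff m).mpr hxgt
      have h2 : dF β αs m = 1 := ((hxdig x hxmem m (lt_trans hm hjn)).2).trans h1
      have h3 : dF β t m = 0 := (dF_zero_iff m).mpr (le_of_eq hcon)
      rw [hFlow m hm, h2] at h3
      norm_num at h3
    -- Step 4 : the shadowing claim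
    have hccmul : β * cc β t = 1 - t := by
      rw [cc]; field_simp
    have hSgp : 0 < Sg β (j+1) := by
      rw [Sg_succ]
      have := Sg_nonneg (by linarith : (0:ℝ) < β) (β := β) j
      nlinarith
    have SH : ∀ m, (j+1) + m ≤ n →
        (∀ k, k < m → dF β αs ((j+1)+k) = dE β t k) ∧
        ∀ x ∈ matchInterval β αs, t < x →
          ob β x ((j+1)+m) - oa β x m = β^m * Sg β (j+1) * (x - t) := by
      intro m
      induction m with
      | zero =>
        intro _
        refine ⟨fun k hk => absurd hk (Nat.not_lt_zero k), ?_⟩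
        intro x hxmem hxt
        obtain ⟨hx1, hx2⟩ := hxIoo x hxmem
        have hbA := bAff hb1 hb2 ht1 ht2 hx1 hx2 j (hFagr x hxmem)
        have hFxj : dF β x j = 1 := ((hxdig x hxmem j hjn).2).symm.trans hFj
        have hsucc := ob_succ_eq hb1 hb2 hx1 hx2 (α := x) j
        rw [hFxj] at hsucc
        have : ob β x j = cc β t + Sg β j * (x - t) := by rw [← htie]; linarith
        rw [Nat.add_zero, oa_zero, hsucc, this, Sg_succ]
        linear_combination hccmul
      | succ m ih =>
        intro hm1
        have hmn : (j+1) + m < n := by omega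
        obtain ⟨ihdig, ihval⟩ := ih (by omega)
        -- the new digit
        have hEagr : ∀ x ∈ matchInterval β αs, ∀ k < m, dE β t k = dE β x k :=
          fun x hx k hk => (HE k (by omega)).trans (hxdig x hx k (by omega)).1
        have hslm := slope_pos (β := β) hb1 m
        have hpow : (0:ℝ) < β^m * Sg β (j+1) := by positivity
        have hDig : dF β αs ((j+1)+m) = dE β t m := by
          rcases lt_or_ge (oa β t m) (cc β t) with hlt | hge
          · set ε := (cc β t - oa β t m) / (Sg β m + 1/β + β^m * Sg β (j+1)) with hε
            have hd0 : 0 < Sg β m + 1/β + β^m * Sg β (j+1) := by linarith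
            have hε0 : 0 < ε := div_pos (by linarith) hd0
            obtain ⟨x, hxmem, hxt, hxε⟩ := happ ε hε0
            obtain ⟨hx1, hx2⟩ := hxIoo x hxmem
            have hacm := acmp hb1 hb2 ht1 ht2 hx1 hx2 m (hEagr x hxmem)
            have hval := ihval x hxmem hxt
            have hkey : (Sg β m + 1/β) * (x - t) + β^m * Sg β (j+1) * (x - t) < cc β t - oa β t m := by
              have h' := mul_lt_mul_of_pos_left (show x - t < ε by linarith) hd0
              rw [hε, mul_div_cancel₀ _ (ne_of_gt hd0)] at h'
              nlinarith [h']
            have hxlt : ob β x ((j+1)+m) ≤ cc β x := by linarith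
            have h1 : dF β x ((j+1)+m) = 0 := (dF_zero_iff _).mpr hxlt
            have h2 : dF β αs ((j+1)+m) = 0 := ((hxdig x hxmem _ hmn).2).trans h1
            rw [h2, (dE_zero_iff m).mpr hlt]
          · obtain ⟨x, hxmem, hxt, _⟩ := happ 1 one_pos
            obtain ⟨hx1, hx2⟩ := hxIoo x hxmem
            have hacm := acmp hb1 hb2 ht1 ht2 hx1 hx2 m (hEagr x hxmem)
            have hval := ihval x hxmem hxt
            have hpos1 : 0 < (Sg β m + 1/β) * (x - t) := mul_pos hslm (by linarith)
            have hpos2 : 0 < β^m * Sg β (j+1) * (x - t) := mul_pos hpow (by linarith)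
            have hxgt : cc β x < ob β x ((j+1)+m) := by linarith
            have h1 : dF β x ((j+1)+m) = 1 := (dF_one_iff _).mpr hxgt
            have h2 : dF β αs ((j+1)+m) = 1 := ((hxdig x hxmem _ hmn).2).trans h1
            rw [h2, (dE_one_iff m).mpr hge]
        refine ⟨?_, ?_⟩
        · intro k hk
          rcases Nat.lt_or_ge k m with h | h
          · exact ihdig k h
          · have : k = m := by omega
            rw [this]; exact hDig
        · intro x hxmem hxt
          obtain ⟨hx1, hx2⟩ := hxIoo x hxmem
          have hval := ihval x hxmem hxt
          have hb_succ : ob β x ((j+1)+(m+1)) = β * ob β x ((j+1)+m) + x - dF β x ((j+1)+m) := by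
            have : (j+1)+(m+1) = ((j+1)+m)+1 := by omega
            rw [this, ob_succ_eq hb1 hb2 hx1 hx2]
          have ha_succ : oa β x (m+1) = β * oa β x m + x - dE β x m :=
            oa_succ_eq hb1 hb2 hx1 hx2 m
          have hdd : dF β x ((j+1)+m) = dE β x m := by
            have e1 : dF β x ((j+1)+m) = dF β αs ((j+1)+m) := ((hxdig x hxmem _ hmn).2).symm
            have e2 : dE β t m = dE β αs m := HE m (by omega)
            have e3 : dE β αs m = dE β x m := (hxdig x hxmem m (by omega)).1
            rw [e1, hDig, e2, e3]
          rw [hb_succ, ha_succ, hdd, pow_succ]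
          linear_combination β * hval
    -- Step 5 : extraction of the conclusions
    refine ⟨j, hjn, htie, hnotie, ?_, ?_⟩
    · -- r2 : no matching of t before (and including) j
      intro m hm0 hmj hcon
      obtain ⟨x, hxmem, hxt, _⟩ := happ 1 one_pos
      obtain ⟨hx1, hx2⟩ := hxIoo x hxmem
      have haA := aAff hb1 hb2 ht1 ht2 hx1 hx2 m
        (fun k hk => (HE k (by omega)).trans (hxdig x hxmem k (by omega)).1)
      have hbA := bAff hb1 hb2 ht1 ht2 hx1 hx2 m
        (fun k hk => hFagr x hxmem k (by omega))
      have heq : oa β x m = ob β x m := by linarith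
      have hmtx : matchingTime β x = n := (hxmem.2.2.2.1).symm
      exact mt_min (by rw [hmtx]; omega) heq
    · -- r3 : the return equality
      have hpn : j + 1 ≤ n := hjn
      refine ⟨n - (j+1), by omega, ?_⟩
      obtain ⟨x, hxmem, hxt, _⟩ := happ 1 one_pos
      obtain ⟨hx1, hx2⟩ := hxIoo x hxmem
      set ms := n - (j+1) with hms
      have hmseq : (j+1) + ms = n := by omega
      have hval := (SH ms (by omega)).2 x hxmem hxt
      rw [hmseq] at hval
      have hMx : HasMatching β x := hxmem.2.2.1
      have hmtx : matchingTime β x = n := (hxmem.2.2.2.1).symm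
      have hmatch : oa β x n = ob β x n := by
        have := mt_match (β := β) (α := x) hMx
        rw [hmtx] at this
        exact this
      have haAn := aAff hb1 hb2 ht1 ht2 hx1 hx2 n
        (fun k hk => (HE k hk).trans (hxdig x hxmem k hk).1)
      have haAm := aAff hb1 hb2 ht1 ht2 hx1 hx2 ms
        (fun k hk => (HE k (by omega)).trans (hxdig x hxmem k (by omega)).1)
      have hSgadd : Sg β n = Sg β ms + β^ms * Sg β (j+1) := by
        have : ms + (j+1) = n := by omega
        rw [← this, Sg_add]
      have hidx : ms + (j+1) = n := by omega
      rw [hidx]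
      linear_combination -haAm + haAn - hval - hmatch + (x - t) * hSgadd

end lemR

end Aux

namespace Aux

section lemL

variable {β αs t : ℝ}

/-- Left-side endpoint lemma (mirror of `lemR`). -/
lemma lemL (hb1 : 1 < β) (hb2 : β < 2)
    (hss : αs ∈ Set.Ioo (0:ℝ) (2 - β)) (hM : HasMatching β αs)
    (hts : t ∈ Set.Ioo (0:ℝ) (2 - β))
    (happ : ∀ ε > (0:ℝ), ∃ x ∈ matchInterval β αs, t - ε < x ∧ x < t) :
    DigEq β αs t (matchingTime β αs) ∨
    ∃ i, i < matchingTime β αs ∧ oa β t i = cc β t ∧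
      (∀ m < i, oa β t m ≠ cc β t) ∧
      (∀ m, 0 < m → m ≤ i → oa β t m ≠ ob β t m) ∧
      ∃ ms, ms + (i+1) = matchingTime β αs ∧ ob β t ms = ob β t (ms + (i+1)) := by
  set n := matchingTime β αs with hn
  have ht1 : (0:ℝ) ≤ t := le_of_lt hts.1
  have ht2 : t < 2 - β := hts.2
  have hβ0 : (0:ℝ) < β := by linarith
  have hxdig : ∀ x ∈ matchInterval β αs, DigEq β αs x n :=
    fun x hx => (mem_class_iff hb1 hb2 hss hM hx.1).mp hx
  have hxIoo : ∀ x ∈ matchInterval β αs, (0:ℝ) ≤ x ∧ x < 2 - β :=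
    fun x hx => ⟨le_of_lt hx.1.1, hx.1.2⟩
  -- Step 1 : f-digits of t agree with the class words all the way to n
  have HF : ∀ m, m < n → dF β t m = dF β αs m := by
    intro m
    induction m using Nat.strong_induction_on with
    | _ m IH =>
      intro hmn
      have hblw : ∀ k < m, dF β t k = dF β αs k := fun k hk => IH k hk (lt_trans hk hmn)
      have hsl := slope_pos (β := β) hb1 m
      rcases le_or_gt (ob β t m) (cc β t) with hle | hgt
      · obtain ⟨x, hxmem, hxε, hxt⟩ := happ 1 one_pos
        obtain ⟨hx1, hx2⟩ := hxIoo x hxmem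
        have hagr : ∀ k < m, dF β t k = dF β x k :=
          fun k hk => (hblw k hk).trans (hxdig x hxmem k (lt_trans hk hmn)).2
        have hbcm := bcmp hb1 hb2 ht1 ht2 hx1 hx2 m hagr
        have hneg : (Sg β m + 1/β) * (x - t) < 0 := mul_neg_of_pos_of_neg hsl (by linarith)
        have hxle : ob β x m ≤ cc β x := by linarith
        have h1 : dF β x m = 0 := (dF_zero_iff m).mpr hxle
        have h2 : dF β αs m = 0 := ((hxdig x hxmem m hmn).2).trans h1
        rw [h2, (dF_zero_iff m).mpr hle]
      · set ε := (ob β t m - cc β t) / (Sg β m + 1/β) with hε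
        have hε0 : 0 < ε := div_pos (by linarith) hsl
        obtain ⟨x, hxmem, hxε, hxt⟩ := happ ε hε0
        obtain ⟨hx1, hx2⟩ := hxIoo x hxmem
        have hagr : ∀ k < m, dF β t k = dF β x k :=
          fun k hk => (hblw k hk).trans (hxdig x hxmem k (lt_trans hk hmn)).2
        have hbcm := bcmp hb1 hb2 ht1 ht2 hx1 hx2 m hagr
        have hkey : (Sg β m + 1/β) * (t - x) < ob β t m - cc β t := by
          have := mul_lt_mul_of_pos_left (show t - x < ε by linarith) hsl
          rw [hε, mul_div_cancel₀ _ (ne_of_gt hsl)] at this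
          linarith
        have hxgt : cc β x < ob β x m := by nlinarith
        have h1 : dF β x m = 1 := (dF_one_iff m).mpr hxgt
        have h2 : dF β αs m = 1 := ((hxdig x hxmem m hmn).2).trans h1
        rw [h2, (dF_one_iff m).mpr hgt]
  by_cases hfull : ∀ m, m < n → dE β t m = dE β αs m
  · left
    intro m hm
    exact ⟨(hfull m hm).symm, (HF m hm).symm⟩
  · right
    push_neg at hfull
    set S := {m | m < n ∧ dE β t m ≠ dE β αs m} with hS
    have hSne : S.Nonempty := by
      obtain ⟨m, h1, h2⟩ := hfull
      exact ⟨m, by rw [hS]; exact ⟨h1, h2⟩⟩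
    set i := sInf S with hidef
    have himem : i ∈ S := Nat.sInf_mem hSne
    rw [hS] at himem
    have hin : i < n := himem.1
    have himis : dE β t i ≠ dE β αs i := himem.2
    have hElow : ∀ m < i, dE β t m = dE β αs m := by
      intro m hm
      by_contra hcon
      have hmem : m ∈ S := by rw [hS]; exact ⟨lt_trans hm hin, hcon⟩
      exact Nat.notMem_of_lt_sInf hm hmem
    have hEagr : ∀ x ∈ matchInterval β αs, ∀ k < i, dE β t k = dE β x k :=
      fun x hx k hk => (hElow k hk).trans (hxdig x hx k (lt_trans hk hin)).1
    have hsli := slope_pos (β := β) hb1 i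
    -- Step 2 : the orbit of 0 at t hits cc at time i
    have htie : oa β t i = cc β t := by
      rcases lt_trichotomy (oa β t i) (cc β t) with hlt | heq | hgt
      · exfalso
        obtain ⟨x, hxmem, hxε, hxt⟩ := happ 1 one_pos
        obtain ⟨hx1, hx2⟩ := hxIoo x hxmem
        have hacm := acmp hb1 hb2 ht1 ht2 hx1 hx2 i (hEagr x hxmem)
        have hneg : (Sg β i + 1/β) * (x - t) < 0 := mul_neg_of_pos_of_neg hsli (by linarith)
        have hxlt : oa β x i < cc β x := by linarith
        have h1 : dE β x i = 0 := (dE_zero_iff i).mpr hxlt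
        have h2 : dE β αs i = 0 := ((hxdig x hxmem i hin).1).trans h1
        have h3 : dE β t i = 0 := (dE_zero_iff i).mpr hlt
        exact himis (h3.trans h2.symm)
      · exact heq
      · exfalso
        set ε := (oa β t i - cc β t) / (Sg β i + 1/β) with hε
        have hε0 : 0 < ε := div_pos (by linarith) hsli
        obtain ⟨x, hxmem, hxε, hxt⟩ := happ ε hε0
        obtain ⟨hx1, hx2⟩ := hxIoo x hxmem
        have hacm := acmp hb1 hb2 ht1 ht2 hx1 hx2 i (hEagr x hxmem)
        have hkey : (Sg β i + 1/β) * (t - x) < oa β t i - cc β t := by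
          have := mul_lt_mul_of_pos_left (show t - x < ε by linarith) hsli
          rw [hε, mul_div_cancel₀ _ (ne_of_gt hsli)] at this
          linarith
        have hxge : cc β x ≤ oa β x i := by nlinarith
        have h1 : dE β x i = 1 := (dE_one_iff i).mpr hxge
        have h2 : dE β αs i = 1 := ((hxdig x hxmem i hin).1).trans h1
        have h3 : dE β t i = 1 := (dE_one_iff i).mpr (le_of_lt hgt)
        exact himis (h3.trans h2.symm)
    have hEi : dE β αs i = 0 := by
      have h3 : dE β t i = 1 := (dE_one_iff i).mpr (le_of_eq htie.symm)
      rcases dE_cases (β := β) (α := αs) i with h | h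
      · exact h
      · exact absurd (h3.trans h.symm) himis
    -- Step 3 : no earlier tie of the orbit of 0
    have hnotie : ∀ m < i, oa β t m ≠ cc β t := by
      intro m hm hcon
      obtain ⟨x, hxmem, hxε, hxt⟩ := happ 1 one_pos
      obtain ⟨hx1, hx2⟩ := hxIoo x hxmem
      have hacm := acmp hb1 hb2 ht1 ht2 hx1 hx2 m
        (fun k hk => hEagr x hxmem k (lt_trans hk hm))
      have hslm := slope_pos (β := β) hb1 m
      have hneg : (Sg β m + 1/β) * (x - t) < 0 := mul_neg_of_pos_of_neg hslm (by linarith)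
      have hxlt : oa β x m < cc β x := by
        rw [hcon] at hacm; linarith
      have h1 : dE β x m = 0 := (dE_zero_iff m).mpr hxlt
      have h2 : dE β αs m = 0 := ((hxdig x hxmem m (lt_trans hm hin)).1).trans h1
      have h3 : dE β t m = 1 := (dE_one_iff m).mpr (le_of_eq hcon.symm)
      rw [hElow m hm, h2] at h3
      norm_num at h3
    -- Step 4 : the shadowing claim
    have hccmul : β * cc β t = 1 - t := by
      rw [cc]; field_simp
    have hSgp : 0 < Sg β (i+1) := by
      rw [Sg_succ]
      have := Sg_nonneg (by linarith : (0:ℝ) < β) (β := β) i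
      nlinarith
    have SH : ∀ m, (i+1) + m ≤ n →
        (∀ k, k < m → dE β αs ((i+1)+k) = dF β t k) ∧
        ∀ x ∈ matchInterval β αs, x < t →
          oa β x ((i+1)+m) - ob β x m = β^m * Sg β (i+1) * (x - t) := by
      intro m
      induction m with
      | zero =>
        intro _
        refine ⟨fun k hk => absurd hk (Nat.not_lt_zero k), ?_⟩
        intro x hxmem hxt
        obtain ⟨hx1, hx2⟩ := hxIoo x hxmem
        have haA := aAff hb1 hb2 ht1 ht2 hx1 hx2 i (hEagr x hxmem)
        have hExi : dE β x i = 0 := ((hxdig x hxmem i hin).1).symm.trans hEi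
        have hsucc := oa_succ_eq hb1 hb2 hx1 hx2 (α := x) i
        rw [hExi] at hsucc
        have : oa β x i = cc β t + Sg β i * (x - t) := by rw [← htie]; linarith
        rw [Nat.add_zero, ob_zero, hsucc, this, Sg_succ]
        linear_combination hccmul
      | succ m ih =>
        intro hm1
        have hmn : (i+1) + m < n := by omega
        obtain ⟨ihdig, ihval⟩ := ih (by omega)
        have hFagr2 : ∀ x ∈ matchInterval β αs, ∀ k < m, dF β t k = dF β x k :=
          fun x hx k hk => (HF k (by omega)).trans (hxdig x hx k (by omega)).2
        have hslm := slope_pos (β := β) hb1 m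
        have hpow : (0:ℝ) < β^m * Sg β (i+1) := by positivity
        have hDig : dE β αs ((i+1)+m) = dF β t m := by
          rcases le_or_gt (ob β t m) (cc β t) with hle | hgt
          · obtain ⟨x, hxmem, hxε, hxt⟩ := happ 1 one_pos
            obtain ⟨hx1, hx2⟩ := hxIoo x hxmem
            have hbcm := bcmp hb1 hb2 ht1 ht2 hx1 hx2 m (hFagr2 x hxmem)
            have hval := ihval x hxmem hxt
            have hneg1 : (Sg β m + 1/β) * (x - t) < 0 := mul_neg_of_pos_of_neg hslm (by linarith)
            have hneg2 : β^m * Sg β (i+1) * (x - t) < 0 := mul_neg_of_pos_of_neg hpow (by linarith)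
            have hxlt : oa β x ((i+1)+m) < cc β x := by linarith
            have h1 : dE β x ((i+1)+m) = 0 := (dE_zero_iff _).mpr hxlt
            have h2 : dE β αs ((i+1)+m) = 0 := ((hxdig x hxmem _ hmn).1).trans h1
            rw [h2, (dF_zero_iff m).mpr hle]
          · set ε := (ob β t m - cc β t) / (Sg β m + 1/β + β^m * Sg β (i+1)) with hε
            have hd0 : 0 < Sg β m + 1/β + β^m * Sg β (i+1) := by linarith
            have hε0 : 0 < ε := div_pos (by linarith) hd0
            obtain ⟨x, hxmem, hxε, hxt⟩ := happ ε hε0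
            obtain ⟨hx1, hx2⟩ := hxIoo x hxmem
            have hbcm := bcmp hb1 hb2 ht1 ht2 hx1 hx2 m (hFagr2 x hxmem)
            have hval := ihval x hxmem hxt
            have hkey : (Sg β m + 1/β) * (t - x) + β^m * Sg β (i+1) * (t - x) < ob β t m - cc β t := by
              have h' := mul_lt_mul_of_pos_left (show t - x < ε by linarith) hd0
              rw [hε, mul_div_cancel₀ _ (ne_of_gt hd0)] at h'
              nlinarith [h']
            have hxge : cc β x ≤ oa β x ((i+1)+m) := by nlinarith
            have h1 : dE β x ((i+1)+m) = 1 := (dE_one_iff _).mpr hxge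
            have h2 : dE β αs ((i+1)+m) = 1 := ((hxdig x hxmem _ hmn).1).trans h1
            rw [h2, (dF_one_iff m).mpr hgt]
        refine ⟨?_, ?_⟩
        · intro k hk
          rcases Nat.lt_or_ge k m with h | h
          · exact ihdig k h
          · have : k = m := by omega
            rw [this]; exact hDig
        · intro x hxmem hxt
          obtain ⟨hx1, hx2⟩ := hxIoo x hxmem
          have hval := ihval x hxmem hxt
          have ha_succ : oa β x ((i+1)+(m+1)) = β * oa β x ((i+1)+m) + x - dE β x ((i+1)+m) := by
            have : (i+1)+(m+1) = ((i+1)+m)+1 := by omega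
            rw [this, oa_succ_eq hb1 hb2 hx1 hx2]
          have hb_succ : ob β x (m+1) = β * ob β x m + x - dF β x m :=
            ob_succ_eq hb1 hb2 hx1 hx2 m
          have hdd : dE β x ((i+1)+m) = dF β x m := by
            have e1 : dE β x ((i+1)+m) = dE β αs ((i+1)+m) := ((hxdig x hxmem _ hmn).1).symm
            have e2 : dF β t m = dF β αs m := HF m (by omega)
            have e3 : dF β αs m = dF β x m := (hxdig x hxmem m (by omega)).2
            rw [e1, hDig, e2, e3]
          rw [ha_succ, hb_succ, hdd, pow_succ]
          linear_combination β * hval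
    -- Step 5 : extraction
    refine ⟨i, hin, htie, hnotie, ?_, ?_⟩
    · intro m hm0 hmi hcon
      obtain ⟨x, hxmem, hxε, hxt⟩ := happ 1 one_pos
      obtain ⟨hx1, hx2⟩ := hxIoo x hxmem
      have haA := aAff hb1 hb2 ht1 ht2 hx1 hx2 m
        (fun k hk => hEagr x hxmem k (by omega))
      have hbA := bAff hb1 hb2 ht1 ht2 hx1 hx2 m
        (fun k hk => (HF k (by omega)).trans (hxdig x hxmem k (by omega)).2)
      have heq : oa β x m = ob β x m := by linarith
      have hmtx : matchingTime β x = n := (hxmem.2.2.2.1).symm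
      exact mt_min (by rw [hmtx]; omega) heq
    · have hpn : i + 1 ≤ n := hin
      refine ⟨n - (i+1), by omega, ?_⟩
      obtain ⟨x, hxmem, hxε, hxt⟩ := happ 1 one_pos
      obtain ⟨hx1, hx2⟩ := hxIoo x hxmem
      set ms := n - (i+1) with hms
      have hmseq : (i+1) + ms = n := by omega
      have hval := (SH ms (by omega)).2 x hxmem hxt
      rw [hmseq] at hval
      have hMx : HasMatching β x := hxmem.2.2.1
      have hmtx : matchingTime β x = n := (hxmem.2.2.2.1).symm
      have hmatch : oa β x n = ob β x n := by
        have := mt_match (β := β) (α := x) hMx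
        rw [hmtx] at this
        exact this
      have hbAn := bAff hb1 hb2 ht1 ht2 hx1 hx2 n
        (fun k hk => (HF k hk).trans (hxdig x hxmem k hk).2)
      have hbAm := bAff hb1 hb2 ht1 ht2 hx1 hx2 ms
        (fun k hk => (HF k (by omega)).trans (hxdig x hxmem k (by omega)).2)
      have hSgadd : Sg β n = Sg β ms + β^ms * Sg β (i+1) := by
        have : ms + (i+1) = n := by omega
        rw [← this, Sg_add]
      have hidx : ms + (i+1) = n := by omega
      rw [hidx]
      linear_combination -hbAm + hbAn - hval + hmatch + (x - t) * hSgadd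

end lemL

end Aux

namespace Aux

section cases

variable {β α₁ α₂ t : ℝ}

lemma joint_orbit_a {N M : ℕ} (hNM : N ≤ M) (hstart : oa β t N = ob β t N)
    (hnotie : ∀ m, N ≤ m → m < M → oa β t m ≠ cc β t) :
    oa β t M = ob β t M := by
  induction M, hNM using Nat.le_induction with
  | base => exact hstart
  | succ M hNM ih =>
    have ihM := ih (fun m hm hm' => hnotie m hm (by omega))
    rw [oa_succ, ob_succ, ← ihM]
    exact TposTneg (hnotie M hNM (by omega))

/-- Case: `t` belongs to the class of `αm`, and the class of `αr` approaches `t`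
from the right. -/
lemma case_mem_right (hb1 : 1 < β) (hb2 : β < 2)
    (hs1 : α₁ ∈ Set.Ioo (0:ℝ) (2 - β)) (hM1 : HasMatching β α₁)
    (hs2 : α₂ ∈ Set.Ioo (0:ℝ) (2 - β)) (hM2 : HasMatching β α₂)
    (hne : matchInterval β α₁ ≠ matchInterval β α₂)
    (htA : t ∈ matchInterval β α₁)
    (happ : ∀ ε > (0:ℝ), ∃ x ∈ matchInterval β α₂, t < x ∧ x < t + ε) : False := by
  have hts : t ∈ Set.Ioo (0:ℝ) (2 - β) := htA.1
  rcases lemR hb1 hb2 hs2 hM2 hts happ with hfullB | ⟨j, hjn, htie, hnot, hr2, ms, hmsn, hret⟩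
  · exact classes_disj hb1 hb2 hs1 hM1 hs2 hM2 hne htA
      ((mem_class_iff hb1 hb2 hs2 hM2 hts).mpr hfullB)
  · have hMt : HasMatching β t := htA.2.2.1
    have htmatch : oa β t (matchingTime β t) = ob β t (matchingTime β t) := mt_match hMt
    have hnt0 : 0 < matchingTime β t := mt_pos hMt
    have hntj : j < matchingTime β t := by
      by_contra h
      push_neg at h
      exact hr2 _ hnt0 h htmatch
    have htieiff := ob_tie_iff hnot htie
    obtain ⟨m₁, hm₁N, hm₁mod, hm₁min⟩ := exists_first_res (j+1) j (matchingTime β t) (by omega)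
    have hjoint : oa β t m₁ = ob β t m₁ := by
      apply joint_orbit hm₁N htmatch
      intro m hm hm' hcon
      exact hm₁min m hm hm' ((htieiff m).mp hcon)
    have hatie : oa β t m₁ = cc β t := by
      rw [hjoint]
      exact (htieiff m₁).mpr hm₁mod
    have haper := a_period_of_tie hatie
    have hprop := oa_propagate (P := m₁+1) (p := j+1) (m₀ := ms) (by omega) haper hret.symm
    have hoap : oa β t (j+1) = 0 := by
      have h0 := hprop 0
      rw [Nat.zero_add, oa_zero] at h0
      exact h0
    have hoaj : oa β t j = cc β t := lemZ hb1 hb2 hts.2 hts.1 j hoap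
    have hj0 : 0 < j := by
      rcases Nat.eq_zero_or_pos j with h | h
      · exfalso
        rw [h, ob_zero] at htie
        have := cc_lt_one hb1 (le_of_lt hts.1) (α := t)
        linarith
      · exact h
    exact hr2 j hj0 le_rfl (by rw [hoaj, htie])

/-- Case: `t` belongs to the class of `α₁`, and the class of `α₂` approaches `t`
from the left. -/
lemma case_mem_left (hb1 : 1 < β) (hb2 : β < 2)
    (hs1 : α₁ ∈ Set.Ioo (0:ℝ) (2 - β)) (hM1 : HasMatching β α₁)
    (hs2 : α₂ ∈ Set.Ioo (0:ℝ) (2 - β)) (hM2 : HasMatching β α₂)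
    (hne : matchInterval β α₁ ≠ matchInterval β α₂)
    (htA : t ∈ matchInterval β α₁)
    (happ : ∀ ε > (0:ℝ), ∃ x ∈ matchInterval β α₂, t - ε < x ∧ x < t) : False := by
  have hts : t ∈ Set.Ioo (0:ℝ) (2 - β) := htA.1
  rcases lemL hb1 hb2 hs2 hM2 hts happ with hfullB | ⟨i, hin, htie, hnot, hr2, ms, hmsn, hret⟩
  · exact classes_disj hb1 hb2 hs1 hM1 hs2 hM2 hne htA
      ((mem_class_iff hb1 hb2 hs2 hM2 hts).mpr hfullB)
  · have hMt : HasMatching β t := htA.2.2.1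
    have htmatch : oa β t (matchingTime β t) = ob β t (matchingTime β t) := mt_match hMt
    have hnt0 : 0 < matchingTime β t := mt_pos hMt
    have hnti : i < matchingTime β t := by
      by_contra h
      push_neg at h
      exact hr2 _ hnt0 h htmatch
    have htieiff := oa_tie_iff hnot htie
    obtain ⟨m₁, hm₁N, hm₁mod, hm₁min⟩ := exists_first_res (i+1) i (matchingTime β t) (by omega)
    have hjoint : oa β t m₁ = ob β t m₁ := by
      apply joint_orbit_a hm₁N htmatch
      intro m hm hm' hcon
      exact hm₁min m hm hm' ((htieiff m).mp hcon)
    have hbtie : ob β t m₁ = cc β t := by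
      rw [← hjoint]
      exact (htieiff m₁).mpr hm₁mod
    have hbper := b_period_of_tie hbtie
    have hprop := ob_propagate (P := m₁+1) (p := i+1) (m₀ := ms) (by omega) hbper hret.symm
    have hobq : ob β t (i+1) = 1 := by
      have h0 := hprop 0
      rw [Nat.zero_add, ob_zero] at h0
      exact h0
    have hobi : ob β t i = cc β t := lemZ' hb1 hb2 (le_of_lt hts.1) hts.2 i hobq
    have hi0 : 0 < i := by
      rcases Nat.eq_zero_or_pos i with h | h
      · exfalso
        rw [h, oa_zero] at htie
        have := cc_pos hb1 hts.2 (α := t)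
        linarith
      · exact h
    exact hr2 i hi0 le_rfl (by rw [htie, hobi])

/-- Case: the class of `α₁` approaches `t` from the left, the class of `α₂` from the
right. -/
lemma case_opp (hb1 : 1 < β) (hb2 : β < 2)
    (hs1 : α₁ ∈ Set.Ioo (0:ℝ) (2 - β)) (hM1 : HasMatching β α₁)
    (hs2 : α₂ ∈ Set.Ioo (0:ℝ) (2 - β)) (hM2 : HasMatching β α₂)
    (hne : matchInterval β α₁ ≠ matchInterval β α₂)
    (happL : ∀ ε > (0:ℝ), ∃ x ∈ matchInterval β α₁, t - ε < x ∧ x < t)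
    (happR : ∀ ε > (0:ℝ), ∃ x ∈ matchInterval β α₂, t < x ∧ x < t + ε) : False := by
  have hts : t ∈ Set.Ioo (0:ℝ) (2 - β) := by
    obtain ⟨x, hx, _, hxt⟩ := happL 1 one_pos
    obtain ⟨y, hy, hty, _⟩ := happR 1 one_pos
    exact ⟨lt_trans hx.1.1 hxt, lt_trans hty hy.1.2⟩
  rcases lemL hb1 hb2 hs1 hM1 hts happL with hfullA | ⟨i, hin, hatie, hanot, har2, msA, hmsnA, hretA⟩
  · exact case_mem_right hb1 hb2 hs1 hM1 hs2 hM2 hne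
      ((mem_class_iff hb1 hb2 hs1 hM1 hts).mpr hfullA) happR
  rcases lemR hb1 hb2 hs2 hM2 hts happR with hfullB | ⟨j, hjn, hbtie, hbnot, hbr2, msB, hmsnB, hretB⟩
  · exact case_mem_left hb1 hb2 hs2 hM2 hs1 hM1 hne.symm
      ((mem_class_iff hb1 hb2 hs2 hM2 hts).mpr hfullB) happL
  have haper := a_period_of_tie hatie
  have hbper := b_period_of_tie hbtie
  -- propagate the a-return of the right class through the a-period
  have hprop_a := oa_propagate (P := i+1) (p := j+1) (m₀ := msB) (by omega) haper hretB.symm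
  have hoap : oa β t (j+1) = 0 := by
    have h0 := hprop_a 0
    rw [Nat.zero_add, oa_zero] at h0
    exact h0
  have hoaj : oa β t j = cc β t := lemZ hb1 hb2 hts.2 hts.1 j hoap
  have hij : i ≤ j := by
    by_contra h
    push_neg at h
    exact hanot j h hoaj
  -- propagate the b-return of the left class through the b-period
  have hprop_b := ob_propagate (P := j+1) (p := i+1) (m₀ := msA) (by omega) hbper hretA.symm
  have hobq : ob β t (i+1) = 1 := by
    have h0 := hprop_b 0
    rw [Nat.zero_add, ob_zero] at h0
    exact h0
  have hobi : ob β t i = cc β t := lemZ' hb1 hb2 (le_of_lt hts.1) hts.2 i hobq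
  have hji : j ≤ i := by
    by_contra h
    push_neg at h
    exact hbnot i h hobi
  have hieqj : i = j := le_antisymm hij hji
  have hi0 : 0 < i := by
    rcases Nat.eq_zero_or_pos i with h | h
    · exfalso
      rw [h, oa_zero] at hatie
      have := cc_pos hb1 hts.2 (α := t)
      linarith
    · exact h
  exact hbr2 i hi0 (le_of_eq hieqj) (by rw [hatie, hobi])

/-- From membership in the closure: either member, or approached from the left,
or approached from the right. -/
lemma approach {C : Set ℝ} (ht : t ∈ closure C) :
    t ∈ C ∨ (∀ ε > (0:ℝ), ∃ x ∈ C, t - ε < x ∧ x < t) ∨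
      (∀ ε > (0:ℝ), ∃ x ∈ C, t < x ∧ x < t + ε) := by
  by_cases hmem : t ∈ C
  · exact Or.inl hmem
  by_cases hL : ∀ ε > (0:ℝ), ∃ x ∈ C, t - ε < x ∧ x < t
  · exact Or.inr (Or.inl hL)
  right; right
  push_neg at hL
  obtain ⟨ε₀, hε₀, hL⟩ := hL
  intro ε hε
  obtain ⟨x, hxC, hdist⟩ := Metric.mem_closure_iff.mp ht (min ε ε₀) (lt_min hε hε₀)
  rw [Real.dist_eq] at hdist
  have habs := abs_lt.mp hdist
  have hne' : x ≠ t := fun h => hmem (h ▸ hxC)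
  rcases lt_or_gt_of_ne hne' with hlt | hgt
  · exfalso
    have h1 : t - ε₀ < x := by
      have := habs.2
      have : t - x < min ε ε₀ := by linarith
      have := lt_of_lt_of_le this (min_le_right _ _)
      linarith
    exact absurd (hL x hxC h1) (not_le.mpr hlt)
  · refine ⟨x, hxC, hgt, ?_⟩
    have := habs.1
    have : x - t < min ε ε₀ := by linarith
    have := lt_of_lt_of_le this (min_le_left _ _)
    linarith

lemma no_both_right (hb1 : 1 < β) (hb2 : β < 2)
    (hs1 : α₁ ∈ Set.Ioo (0:ℝ) (2 - β)) (hM1 : HasMatching β α₁)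
    (hs2 : α₂ ∈ Set.Ioo (0:ℝ) (2 - β)) (hM2 : HasMatching β α₂)
    (hne : matchInterval β α₁ ≠ matchInterval β α₂)
    (happ1 : ∀ ε > (0:ℝ), ∃ x ∈ matchInterval β α₁, t < x ∧ x < t + ε)
    (happ2 : ∀ ε > (0:ℝ), ∃ x ∈ matchInterval β α₂, t < x ∧ x < t + ε) : False := by
  obtain ⟨a₁, ha₁, hta₁, _⟩ := happ1 1 one_pos
  obtain ⟨b₁, hb₁, htb₁, hb₁a⟩ := happ2 (a₁ - t) (by linarith)
  obtain ⟨a₂, ha₂, hta₂, ha₂b⟩ := happ1 (b₁ - t) (by linarith)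
  have hmem : b₁ ∈ matchInterval β α₁ :=
    class_convex hb1 hb2 hs1 hM1 ha₂ ha₁ (by linarith) (by linarith)
  exact classes_disj hb1 hb2 hs1 hM1 hs2 hM2 hne hmem hb₁

lemma no_both_left (hb1 : 1 < β) (hb2 : β < 2)
    (hs1 : α₁ ∈ Set.Ioo (0:ℝ) (2 - β)) (hM1 : HasMatching β α₁)
    (hs2 : α₂ ∈ Set.Ioo (0:ℝ) (2 - β)) (hM2 : HasMatching β α₂)
    (hne : matchInterval β α₁ ≠ matchInterval β α₂)
    (happ1 : ∀ ε > (0:ℝ), ∃ x ∈ matchInterval β α₁, t - ε < x ∧ x < t)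
    (happ2 : ∀ ε > (0:ℝ), ∃ x ∈ matchInterval β α₂, t - ε < x ∧ x < t) : False := by
  obtain ⟨a₁, ha₁, _, ha₁t⟩ := happ1 1 one_pos
  obtain ⟨b₁, hb₁, ha₁b, hb₁t⟩ := happ2 (t - a₁) (by linarith)
  obtain ⟨a₂, ha₂, hb₁a, ha₂t⟩ := happ1 (t - b₁) (by linarith)
  have hmem : b₁ ∈ matchInterval β α₁ :=
    class_convex hb1 hb2 hs1 hM1 ha₁ ha₂ (by linarith) (by linarith)
  exact classes_disj hb1 hb2 hs1 hM1 hs2 hM2 hne hmem hb₁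

end cases

end Aux


open Aux

theorem closures_matchIntervals_disjoint (β α₁ α₂ : ℝ)
    (hβ : β ∈ Set.Ioo (1 : ℝ) 2)
    (hα₁ : α₁ ∈ Set.Ioo (0 : ℝ) (2 - β)) (hα₂ : α₂ ∈ Set.Ioo (0 : ℝ) (2 - β))
    (hM₁ : HasMatching β α₁) (hM₂ : HasMatching β α₂)
    (hne : matchInterval β α₁ ≠ matchInterval β α₂) :
    closure (matchInterval β α₁) ∩ closure (matchInterval β α₂) = ∅ := by
  obtain ⟨hb1, hb2⟩ := hβ
  rw [Set.eq_empty_iff_forall_notMem]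
  rintro t ⟨htA, htB⟩
  rcases approach htA with tA | LA | RA <;> rcases approach htB with tB | LB | RB
  · exact classes_disj hb1 hb2 hα₁ hM₁ hα₂ hM₂ hne tA tB
  · exact case_mem_left hb1 hb2 hα₁ hM₁ hα₂ hM₂ hne tA LB
  · exact case_mem_right hb1 hb2 hα₁ hM₁ hα₂ hM₂ hne tA RB
  · exact case_mem_left hb1 hb2 hα₂ hM₂ hα₁ hM₁ hne.symm tB LA
  · exact no_both_left hb1 hb2 hα₁ hM₁ hα₂ hM₂ hne LA LB
  · exact case_opp hb1 hb2 hα₁ hM₁ hα₂ hM₂ hne LA RB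
  · exact case_mem_right hb1 hb2 hα₂ hM₂ hα₁ hM₁ hne.symm tB RA
  · exact case_opp hb1 hb2 hα₂ hM₂ hα₁ hM₁ hne.symm LB RA
  · exact no_both_right hb1 hb2 hα₁ hM₁ hα₂ hM₂ hne RA RB
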